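/- For positive reals d₁,...,d₅, the 5×5 matrix DHD (where D = diag(d₁,...,d₅) and H is the Horn matrix) is Reznick-certifiable — i.e., (Σᵢxᵢ²)^r (x^{∘2})^T DHD x^{∘2} is a sum of squares for some r ∈ ℕ₀ — if and only if (x^{∘2})^T H x^{∘2} ∈ Σ + I(Σᵢ₌₁⁵ dᵢ⁻¹ xᵢ² - 1), where Σ is the set of sums of squares and I(f) the ideal generated by f. -/

import Mathlib

open MvPolynomial

def IsSOS {n : ℕ} (f : MvPolynomial (Fin n) ℝ) : Prop :=
  ∃ (m : ℕ) (p : Fin m → MvPolynomial (Fin n) ℝ), f = ∑ i, (p i) ^ 2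

def Horn : Matrix (Fin 5) (Fin 5) ℝ :=
  !![1,1,-1,-1,1; 1,1,1,-1,-1; -1,1,1,1,-1; -1,-1,1,1,1; 1,-1,-1,1,1]

noncomputable def quartForm {n : ℕ} (M : Matrix (Fin n) (Fin n) ℝ) :
    MvPolynomial (Fin n) ℝ :=
  ∑ i, ∑ j, MvPolynomial.C (M i j) * X i ^ 2 * X j ^ 2

namespace SOSAux

variable {n : ℕ}

lemma isSOS_zero : IsSOS (0 : MvPolynomial (Fin n) ℝ) := ⟨0, ![], by simp⟩

lemma isSOS_add {f g : MvPolynomial (Fin n) ℝ} (hf : IsSOS f) (hg : IsSOS g) :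
    IsSOS (f + g) := by
  obtain ⟨m, p, rfl⟩ := hf
  obtain ⟨m', q, rfl⟩ := hg
  exact ⟨m + m', Fin.append p q, by
    rw [Fin.sum_univ_add]
    simp [Fin.append_left, Fin.append_right]⟩

lemma isSOS_sum {ι : Type*} (t : Finset ι) (f : ι → MvPolynomial (Fin n) ℝ)
    (h : ∀ i ∈ t, IsSOS (f i)) : IsSOS (∑ i ∈ t, f i) := by
  classical
  induction t using Finset.induction_on with
  | empty => simpa using isSOS_zero
  | @insert _ _ hx ih =>
    rw [Finset.sum_insert hx]
    exact isSOS_add (h _ (Finset.mem_insert_self _ _))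
      (ih fun i hi => h i (Finset.mem_insert_of_mem hi))

lemma isSOS_sq (p : MvPolynomial (Fin n) ℝ) : IsSOS (p ^ 2) :=
  ⟨1, ![p], by simp⟩

lemma isSOS_s_mul_sq (p : MvPolynomial (Fin n) ℝ) :
    IsSOS ((∑ i, X i ^ 2) * p ^ 2) :=
  ⟨n, fun i => X i * p, by rw [Finset.sum_mul]; exact Finset.sum_congr rfl fun i _ => by ring⟩

lemma isSOS_map {f : MvPolynomial (Fin n) ℝ}
    (F : MvPolynomial (Fin n) ℝ →ₐ[ℝ] MvPolynomial (Fin n) ℝ) (hf : IsSOS f) :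
    IsSOS (F f) := by
  obtain ⟨m, p, rfl⟩ := hf
  exact ⟨m, fun i => F (p i), by simp [map_sum]⟩

lemma eval_smul' {m : ℕ} {φ : MvPolynomial (Fin n) ℝ} (h : φ.IsHomogeneous m)
    (c : ℝ) (x : Fin n → ℝ) :
    eval (fun i => c * x i) φ = c ^ m * eval x φ := by
  rw [eval_eq', eval_eq', Finset.mul_sum]
  refine Finset.sum_congr rfl fun d hd => ?_
  have hdm : ∑ i, d i = m := by
    have h1 := h (mem_support_iff.mp hd)
    rw [← h1, Finsupp.weight_apply]
    simp only [Finsupp.sum, Pi.one_apply, smul_eq_mul, mul_one]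
    exact (Finset.sum_subset (Finset.subset_univ _)
      (fun i _ hi => Finsupp.notMem_support_iff.mp hi)).symm
  calc φ.coeff d * ∏ i, (c * x i) ^ d i
      = φ.coeff d * ((∏ i, c ^ d i) * ∏ i, x i ^ d i) := by
        rw [← Finset.prod_mul_distrib]; simp [mul_pow]
    _ = c ^ m * (φ.coeff d * ∏ i, x i ^ d i) := by
        rw [Finset.prod_pow_eq_pow_sum, hdm]; ring

lemma s_isHomogeneous : (∑ i, X i ^ 2 : MvPolynomial (Fin n) ℝ).IsHomogeneous 2 :=
  IsHomogeneous.sum _ _ _ fun i _ => isHomogeneous_X_pow _ _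

lemma sum_range_even_odd (f : ℕ → ℝ) (M : ℕ) :
    ∑ j ∈ Finset.range (2 * (M + 1)), f j =
      ∑ j ∈ Finset.range (M + 1), (f (2 * j) + f (2 * j + 1)) := by
  induction M with
  | zero => simp [Finset.sum_range_succ]
  | succ M ih =>
    have h2 : 2 * (M + 1 + 1) = 2 * (M + 1) + 1 + 1 := by ring
    rw [h2, Finset.sum_range_succ, Finset.sum_range_succ, ih]
    conv_rhs => rw [Finset.sum_range_succ]
    ring

lemma eval_sum_sq (x : Fin n → ℝ) : eval x (∑ i, X i ^ 2 : MvPolynomial (Fin n) ℝ)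
    = ∑ i, x i ^ 2 := by simp

lemma main_iff {f : MvPolynomial (Fin n) ℝ} (hf : f.IsHomogeneous 4) :
    (∃ r : ℕ, IsSOS ((∑ i, X i ^ 2) ^ r * f)) ↔
      ∃ σ g : MvPolynomial (Fin n) ℝ, IsSOS σ ∧
        g ∈ Ideal.span {(∑ i, (X i : MvPolynomial (Fin n) ℝ) ^ 2) - 1} ∧ f = σ + g := by
  set s : MvPolynomial (Fin n) ℝ := ∑ i, X i ^ 2 with hs_def
  have hs : s.IsHomogeneous 2 := s_isHomogeneous
  constructor
  · rintro ⟨r, hsos⟩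
    refine ⟨s ^ r * f, f - s ^ r * f, hsos, ?_, by ring⟩
    rw [Ideal.mem_span_singleton]
    have heq : f - s ^ r * f = -((s ^ r - 1 ^ r) * f) := by ring
    rw [heq]
    exact dvd_neg.mpr ((sub_dvd_pow_sub_pow s 1 r).mul_right f)
  · rintro ⟨σ, g, ⟨m, p, hp⟩, hgmem, hfeq⟩
    obtain ⟨h, hh⟩ := Ideal.mem_span_singleton.mp hgmem
    classical
    set Nb : ℕ := Finset.univ.sup fun k => (p k).totalDegree with hNb_def
    set N : ℕ := Nb + 1 with hN_def
    have hNk : ∀ k, (p k).totalDegree ≤ Nb := fun k => hNb_def ▸ Finset.le_sup (f := fun k => (p k).totalDegree) (Finset.mem_univ k)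
    set E : Fin m → MvPolynomial (Fin n) ℝ := fun k =>
      ∑ j ∈ Finset.range (N + 1), s ^ (N - j) * homogeneousComponent (2 * j) (p k) with hE_def
    set O : Fin m → MvPolynomial (Fin n) ℝ := fun k =>
      ∑ j ∈ Finset.range (N + 1), s ^ (N - j) * homogeneousComponent (2 * j + 1) (p k)
      with hO_def
    set F : MvPolynomial (Fin n) ℝ := ∑ k, (s * E k ^ 2 + O k ^ 2) with hF_def
    -- decomposition of p k into all homogeneous components up to 2*(N+1)
    have hdecomp : ∀ k, ∑ j ∈ Finset.range (2 * (N + 1)), homogeneousComponent j (p k) = p k := by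
      intro k
      rw [← Finset.sum_subset (Finset.range_subset_range.mpr
        (show (p k).totalDegree + 1 ≤ 2 * (N + 1) by have := hNk k; omega))
        (fun j _ hj' => homogeneousComponent_eq_zero j (p k)
          (by simp only [Finset.mem_range, not_lt] at hj'; omega))]
      exact sum_homogeneousComponent (p k)
    have hp_eval : ∀ k (v : Fin n → ℝ), eval v (p k) =
        ∑ j ∈ Finset.range (N + 1),
          (eval v (homogeneousComponent (2 * j) (p k)) +
           eval v (homogeneousComponent (2 * j + 1) (p k))) := by
      intro k v
      conv_lhs => rw [← hdecomp k]
      rw [map_sum, sum_range_even_odd]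
    have hE_eval : ∀ k (v : Fin n → ℝ), eval v (E k) =
        ∑ j ∈ Finset.range (N + 1),
          (eval v s) ^ (N - j) * eval v (homogeneousComponent (2 * j) (p k)) := by
      intro k v; rw [hE_def]; simp [map_sum]
    have hO_eval : ∀ k (v : Fin n → ℝ), eval v (O k) =
        ∑ j ∈ Finset.range (N + 1),
          (eval v s) ^ (N - j) * eval v (homogeneousComponent (2 * j + 1) (p k)) := by
      intro k v; rw [hO_def]; simp [map_sum]
    have hf_at : ∀ (v : Fin n → ℝ), eval v s = 1 → eval v f = ∑ k, (eval v (p k)) ^ 2 := by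
      intro v hv
      rw [hfeq, hp, hh, map_add, map_mul, map_sub, map_one, hv, sub_self, zero_mul, add_zero,
        map_sum]
      simp
    refine ⟨2 * N - 1, ?_⟩
    have key : s ^ (2 * N - 1) * f = F := by
      apply MvPolynomial.funext
      intro x
      rcases eq_or_ne (eval x s) 0 with hx0 | hxne
      · -- all coordinates are zero
        have hxz : ∀ i, x i = 0 := by
          have h1 : ∑ i, x i ^ 2 = 0 := by rw [← eval_sum_sq x]; exact hx0
          intro i
          have := (Finset.sum_eq_zero_iff_of_nonneg
            (fun i _ => sq_nonneg (x i))).mp h1 i (Finset.mem_univ i)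
          exact (pow_eq_zero_iff two_ne_zero).mp this
        have h0 : ∀ (M : ℕ) (φ : MvPolynomial (Fin n) ℝ), φ.IsHomogeneous M → M ≠ 0 →
            eval x φ = 0 := by
          intro M φ hφ hM
          have hsc := eval_smul' hφ 0 x
          have hfun : (fun i => (0 : ℝ) * x i) = x := funext fun i => by rw [hxz i]; ring
          rw [hfun] at hsc
          rw [hsc, zero_pow hM, zero_mul]
        have hfx : eval x f = 0 := h0 4 f hf (by norm_num)
        have hOx : ∀ k, eval x (O k) = 0 := by
          intro k
          rw [hO_eval k x]
          refine Finset.sum_eq_zero fun j _ => ?_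
          rw [h0 (2 * j + 1) _ (homogeneousComponent_isHomogeneous _ _) (by omega), mul_zero]
        rw [map_mul, map_pow, hfx, mul_zero, hF_def, map_sum]
        symm
        refine Finset.sum_eq_zero fun k _ => ?_
        rw [map_add, map_mul, map_pow, map_pow, hx0, hOx k, zero_mul]
        norm_num
      · -- nonzero case
        have hxsum : eval x s = ∑ i, x i ^ 2 := eval_sum_sq x
        have hxpos : 0 < eval x s := by
          rcases (Finset.sum_nonneg fun i _ => sq_nonneg (x i)).lt_or_eq with h | h
          · rwa [hxsum]
          · exact absurd (hxsum.trans h.symm) hxne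
        set c : ℝ := Real.sqrt (eval x s) with hc_def
        have hcpos : 0 < c := Real.sqrt_pos.mpr hxpos
        have hc2 : c ^ 2 = eval x s := Real.sq_sqrt hxpos.le
        set u : Fin n → ℝ := fun i => c⁻¹ * x i with hu_def
        have hux : (fun i => c * u i) = x := funext fun i => by
          rw [hu_def]; field_simp
        have hus : eval u s = 1 := by
          rw [hu_def, eval_smul' hs c⁻¹ x]
          rw [← hc2]; field_simp
        set u' : Fin n → ℝ := fun i => (-1) * u i with hu'_def
        have hus' : eval u' s = 1 := by
          rw [hu'_def, eval_smul' hs (-1) u, hus]; norm_num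
        set a : Fin m → ℝ := fun k =>
          ∑ j ∈ Finset.range (N + 1), eval u (homogeneousComponent (2 * j) (p k)) with ha_def
        set b : Fin m → ℝ := fun k =>
          ∑ j ∈ Finset.range (N + 1), eval u (homogeneousComponent (2 * j + 1) (p k)) with hb_def
        have hpu : ∀ k, eval u (p k) = a k + b k := by
          intro k
          rw [hp_eval k u, Finset.sum_add_distrib]
        have hpu' : ∀ k, eval u' (p k) = a k - b k := by
          intro k
          rw [hp_eval k u', ha_def, hb_def, ← Finset.sum_sub_distrib]
          refine Finset.sum_congr rfl fun j _ => ?_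
          rw [hu'_def,
            eval_smul' (homogeneousComponent_isHomogeneous (2 * j) (p k)) (-1) u,
            eval_smul' (homogeneousComponent_isHomogeneous (2 * j + 1) (p k)) (-1) u]
          have e1 : ((-1 : ℝ)) ^ (2 * j) = 1 := by rw [pow_mul]; norm_num
          have e2 : ((-1 : ℝ)) ^ (2 * j + 1) = -1 := by rw [pow_succ, e1]; norm_num
          rw [e1, e2]; ring
        have hfu2 : eval u f = ∑ k, (a k + b k) ^ 2 := by
          rw [hf_at u hus]
          exact Finset.sum_congr rfl fun k _ => by rw [hpu k]
        have hfu2' : eval u f = ∑ k, (a k - b k) ^ 2 := by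
          have h4 : eval u' f = eval u f := by
            rw [hu'_def, eval_smul' hf (-1) u]; norm_num
          rw [← h4, hf_at u' hus']
          exact Finset.sum_congr rfl fun k _ => by rw [hpu' k]
        have hfu : eval u f = ∑ k, (a k ^ 2 + b k ^ 2) := by
          have h2 : 2 * eval u f = 2 * ∑ k, (a k ^ 2 + b k ^ 2) := by
            calc 2 * eval u f = (∑ k, (a k + b k) ^ 2) + ∑ k, (a k - b k) ^ 2 := by
                  rw [← hfu2, ← hfu2']; ring
              _ = 2 * ∑ k, (a k ^ 2 + b k ^ 2) := by
                  rw [← Finset.sum_add_distrib, Finset.mul_sum]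
                  exact Finset.sum_congr rfl fun k _ => by ring
          linarith
        -- evaluations at x
        have hEx : ∀ k, eval x (E k) = c ^ (2 * N) * a k := by
          intro k
          rw [← hux, hE_eval, ha_def, Finset.mul_sum]
          refine Finset.sum_congr rfl fun j hj => ?_
          rw [eval_smul' hs c u, hus, mul_one,
            eval_smul' (homogeneousComponent_isHomogeneous (2 * j) (p k)) c u,
            ← pow_mul, ← mul_assoc, ← pow_add]
          congr 2
          simp only [Finset.mem_range] at hj
          omega
        have hOx : ∀ k, eval x (O k) = c ^ (2 * N + 1) * b k := by
          intro k
          rw [← hux, hO_eval, hb_def, Finset.mul_sum]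
          refine Finset.sum_congr rfl fun j hj => ?_
          rw [eval_smul' hs c u, hus, mul_one,
            eval_smul' (homogeneousComponent_isHomogeneous (2 * j + 1) (p k)) c u,
            ← pow_mul, ← mul_assoc, ← pow_add]
          congr 2
          simp only [Finset.mem_range] at hj
          omega
        have hfx : eval x f = c ^ 4 * eval u f := by
          rw [← hux, eval_smul' hf c u]
        have hsx : eval x s = c ^ 2 := hc2.symm
        rw [map_mul, map_pow, hsx, hfx, hfu, hF_def, map_sum]
        have hN1 : 1 ≤ N := by rw [hN_def]; omega
        calc (c ^ 2) ^ (2 * N - 1) * (c ^ 4 * ∑ k, (a k ^ 2 + b k ^ 2))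
            = ∑ k, c ^ (4 * N + 2) * (a k ^ 2 + b k ^ 2) := by
              rw [← pow_mul, ← Finset.mul_sum, ← mul_assoc, ← pow_add]
              congr 2
              omega
          _ = ∑ k, eval x (s * E k ^ 2 + O k ^ 2) := by
              refine Finset.sum_congr rfl fun k _ => ?_
              rw [map_add, map_mul, map_pow, map_pow, hsx, hEx k, hOx k]
              rw [mul_pow, mul_pow, ← pow_mul, ← pow_mul]
              rw [show c ^ 2 * (c ^ (2 * N * 2) * a k ^ 2) = c ^ (2 + 2 * N * 2) * a k ^ 2 by
                rw [← mul_assoc, ← pow_add]]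
              rw [show (2 : ℕ) + 2 * N * 2 = 4 * N + 2 by omega,
                show (2 * N + 1) * 2 = 4 * N + 2 by omega]
              ring
    rw [key, hF_def]
    exact isSOS_sum _ _ fun k _ => isSOS_add (isSOS_s_mul_sq (E k)) (isSOS_sq (O k))

noncomputable def scaleSub {n : ℕ} (c : Fin n → ℝ) :
    MvPolynomial (Fin n) ℝ →ₐ[ℝ] MvPolynomial (Fin n) ℝ :=
  aeval fun i => C (c i) * X i

lemma scaleSub_comp {n : ℕ} (c c' : Fin n → ℝ) (q : MvPolynomial (Fin n) ℝ) :
    scaleSub c (scaleSub c' q) = scaleSub (fun i => c i * c' i) q := by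
  have h : (scaleSub c).comp (scaleSub c') = scaleSub (fun i => c i * c' i) := by
    apply MvPolynomial.algHom_ext
    intro i
    simp only [AlgHom.comp_apply, scaleSub, aeval_X, map_mul, aeval_C, algebraMap_eq, map_mul]
    ring
  exact DFunLike.congr_fun h q

lemma scaleSub_inv {n : ℕ} {c c' : Fin n → ℝ} (h : ∀ i, c i * c' i = 1)
    (q : MvPolynomial (Fin n) ℝ) : scaleSub c (scaleSub c' q) = q := by
  rw [scaleSub_comp]
  have h1 : (fun i => c i * c' i) = fun _ => (1 : ℝ) := funext h
  rw [h1]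
  simp [scaleSub]

lemma scaleSub_weighted_sum_sq {n : ℕ} (c w : Fin n → ℝ) :
    scaleSub c (∑ i, C (w i) * X i ^ 2) = ∑ i, C (w i * c i ^ 2) * X i ^ 2 := by
  rw [map_sum]
  refine Finset.sum_congr rfl fun i _ => ?_
  simp only [scaleSub, map_mul, map_pow, aeval_X, aeval_C, algebraMap_eq, C_mul, C_pow]
  ring

lemma scaleSub_quartForm {n : ℕ} (c : Fin n → ℝ) (M : Matrix (Fin n) (Fin n) ℝ) :
    scaleSub c (quartForm M) = quartForm (fun i j => c i ^ 2 * M i j * c j ^ 2) := by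
  unfold quartForm
  rw [map_sum]
  refine Finset.sum_congr rfl fun i _ => ?_
  rw [map_sum]
  refine Finset.sum_congr rfl fun j _ => ?_
  simp only [scaleSub, map_mul, map_pow, aeval_X, aeval_C, algebraMap_eq, C_mul, C_pow]
  ring

lemma quartForm_isHomogeneous {n : ℕ} (M : Matrix (Fin n) (Fin n) ℝ) :
    (quartForm M).IsHomogeneous 4 := by
  unfold quartForm
  refine IsHomogeneous.sum _ _ _ fun i _ => IsHomogeneous.sum _ _ _ fun j _ => ?_
  simpa using ((isHomogeneous_C _ (M i j)).mul (isHomogeneous_X_pow i 2)).mul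
    (isHomogeneous_X_pow j 2)

end SOSAux

open SOSAux
theorem DHD_reznick_iff (d : Fin 5 → ℝ) (hd : ∀ i, 0 < d i) :
    (∃ r : ℕ, IsSOS ((∑ i, X i ^ 2) ^ r *
        quartForm (fun i j => d i * Horn i j * d j))) ↔
      ∃ σ g : MvPolynomial (Fin 5) ℝ, IsSOS σ ∧
        g ∈ Ideal.span {(∑ i, C (d i)⁻¹ * X i ^ 2 : MvPolynomial (Fin 5) ℝ) - 1} ∧
        quartForm Horn = σ + g := by
  refine (SOSAux.main_iff (quartForm_isHomogeneous _)).trans ?_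
  set c : Fin 5 → ℝ := fun i => Real.sqrt (d i) with hc_def
  set c' : Fin 5 → ℝ := fun i => (Real.sqrt (d i))⁻¹ with hc'_def
  have hc2 : ∀ i, c i ^ 2 = d i := fun i => Real.sq_sqrt (hd i).le
  have hcpos : ∀ i, 0 < c i := fun i => Real.sqrt_pos.mpr (hd i)
  have hcc' : ∀ i, c i * c' i = 1 := fun i => mul_inv_cancel₀ (hcpos i).ne'
  have hc'c : ∀ i, c' i * c i = 1 := fun i => inv_mul_cancel₀ (hcpos i).ne'
  have hc'2 : ∀ i, c' i ^ 2 = (d i)⁻¹ := by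
    intro i
    simp only [hc'_def]
    rw [inv_pow, Real.sq_sqrt (hd i).le]
  set t : MvPolynomial (Fin 5) ℝ := ∑ i, C (d i)⁻¹ * X i ^ 2 with ht_def
  set s : MvPolynomial (Fin 5) ℝ := ∑ i, X i ^ 2 with hs_def
  have hsw : s = ∑ i, C ((1 : ℝ)) * X i ^ 2 := by simp [hs_def]
  have hts : scaleSub c t = s := by
    rw [ht_def, scaleSub_weighted_sum_sq, hsw]
    refine Finset.sum_congr rfl fun i _ => ?_
    rw [hc2 i, inv_mul_cancel₀ (hd i).ne']
  have hst : scaleSub c' s = t := by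
    rw [hsw, scaleSub_weighted_sum_sq, ht_def]
    refine Finset.sum_congr rfl fun i _ => ?_
    rw [hc'2 i, one_mul]
  have hqf : scaleSub c (quartForm Horn) = quartForm (fun i j => d i * Horn i j * d j) := by
    rw [scaleSub_quartForm]
    congr 1
    funext i j
    rw [hc2 i, hc2 j]
  have hqf' : scaleSub c' (quartForm (fun i j => d i * Horn i j * d j)) = quartForm Horn := by
    rw [← hqf, scaleSub_inv hc'c]
  constructor
  · rintro ⟨σ, g, hσ, hgmem, heq⟩
    obtain ⟨h, rfl⟩ := Ideal.mem_span_singleton.mp hgmem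
    refine ⟨scaleSub c' σ, scaleSub c' ((s - 1) * h), isSOS_map _ hσ, ?_, ?_⟩
    · rw [map_mul, map_sub, map_one, hst]
      exact Ideal.mem_span_singleton.mpr (dvd_mul_right _ _)
    · have h2 := congrArg (scaleSub c') heq
      rw [map_add, hqf'] at h2
      exact h2
  · rintro ⟨σ, g, hσ, hgmem, heq⟩
    obtain ⟨h, rfl⟩ := Ideal.mem_span_singleton.mp hgmem
    refine ⟨scaleSub c σ, scaleSub c ((t - 1) * h), isSOS_map _ hσ, ?_, ?_⟩
    · rw [map_mul, map_sub, map_one, hts]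
      exact Ideal.mem_span_singleton.mpr (dvd_mul_right _ _)
    · have h2 := congrArg (scaleSub c) heq
      rw [map_add, hqf] at h2
      exact h2
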